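/- Let α be an irrational real number. Then the image of the plane span_ℝ{(1,1,1), (1,α,0)} ⊆ ℝ³ under the quotient map ℝ³ → ℝ³/ℤ³ is dense in the torus ℝ³/ℤ³. -/

import Mathlib

lemma dense_int_add_zmultiples (α : ℝ) (hα : Irrational α) :
    Dense ((AddSubgroup.zmultiples (1:ℝ) ⊔ AddSubgroup.zmultiples α : AddSubgroup ℝ) : Set ℝ) := by
  rcases AddSubgroup.dense_or_cyclic (AddSubgroup.zmultiples (1:ℝ) ⊔ AddSubgroup.zmultiples α) with h | ⟨a, ha⟩
  · exact h
  · exfalso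
    have h1 : (1:ℝ) ∈ AddSubgroup.closure {a} := by
      rw [← ha]; exact AddSubgroup.mem_sup_left (AddSubgroup.mem_zmultiples 1)
    have h2 : α ∈ AddSubgroup.closure {a} := by
      rw [← ha]; exact AddSubgroup.mem_sup_right (AddSubgroup.mem_zmultiples α)
    rw [AddSubgroup.mem_closure_singleton] at h1 h2
    obtain ⟨m, hm⟩ := h1
    obtain ⟨n, hn⟩ := h2
    have hm0 : (m:ℝ) ≠ 0 := by
      rintro h0
      simp only [zsmul_eq_mul] at hm
      rw [h0, zero_mul] at hm; exact one_ne_zero hm.symm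
    have : α = (n : ℝ) / (m : ℝ) := by
      simp only [zsmul_eq_mul] at hm hn
      field_simp
      rw [← hn]
      have : a = 1 / (m:ℝ) := by field_simp [← hm]; rw [mul_comm]; exact hm
      rw [this]; field_simp
    exact hα ⟨(n : ℚ) / m, by push_cast; rw [this]⟩

/-- For irrational `α`, the image of the plane `span_ℝ{(1,1,1),(1,α,0)} ⊆ ℝ³` under
the quotient map `ℝ³ → ℝ³/ℤ³` is dense in the torus. -/
theorem leaf_dense_in_torus (α : ℝ) (hα : Irrational α) :
    Dense
      ((QuotientAddGroup.mk'
          (AddSubgroup.pi Set.univ fun _ : Fin 3 => AddSubgroup.zmultiples (1 : ℝ))) ''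
        ((Submodule.span ℝ {![1, 1, 1], ![1, α, 0]} : Submodule ℝ (Fin 3 → ℝ)) :
          Set (Fin 3 → ℝ))) := by
  set N : AddSubgroup (Fin 3 → ℝ) :=
    AddSubgroup.pi Set.univ fun _ : Fin 3 => AddSubgroup.zmultiples (1 : ℝ) with hN
  set P : Set (Fin 3 → ℝ) :=
    ((Submodule.span ℝ {![1, 1, 1], ![1, α, 0]} : Submodule ℝ (Fin 3 → ℝ)) : Set (Fin 3 → ℝ))
  show Dense ((QuotientAddGroup.mk : (Fin 3 → ℝ) → _ ⧸ N) '' P)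
  rw [QuotientAddGroup.dense_image_mk]
  have hdense := dense_int_add_zmultiples α hα
  rw [Metric.dense_iff]
  intro x ε hε
  -- get g = k + m*α close to c
  set c : ℝ := x 1 - x 2 - (x 0 - x 2) * α with hc
  obtain ⟨g, hgS, hgc⟩ := Metric.mem_closure_iff.1 (hdense c) ε hε
  rw [SetLike.mem_coe, AddSubgroup.mem_sup] at hgS
  obtain ⟨y, hy, z, hz, hyz⟩ := hgS
  obtain ⟨k, hk⟩ := AddSubgroup.mem_zmultiples_iff.1 hy
  obtain ⟨m, hm⟩ := AddSubgroup.mem_zmultiples_iff.1 hz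
  have hg : g = (k : ℝ) + (m : ℝ) * α := by
    rw [← hyz, ← hk, ← hm]; simp [zsmul_eq_mul]
  set p : Fin 3 → ℝ := (x 2) • ![1, 1, 1] + ((x 0 - x 2) + m) • ![1, α, 0] with hp
  set n : Fin 3 → ℝ := ![(-m : ℝ), (k : ℝ), 0] with hn'
  refine ⟨p + n, ?_, Set.add_mem_add ?_ ?_⟩
  · rw [Metric.mem_ball, dist_pi_lt_iff hε]
    have e0 : (p + n) 0 = x 0 := by
      simp [hp, hn']; ring
    have e1 : (p + n) 1 = x 1 + (g - c) := by
      simp [hp, hn', hg, hc]; ring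
    have e2 : (p + n) 2 = x 2 := by
      simp [hp, hn']
    intro i
    fin_cases i
    · show dist ((p + n) 0) (x 0) < ε
      simp [e0, hε]
    · show dist ((p + n) 1) (x 1) < ε
      rw [e1, Real.dist_eq]
      have : x 1 + (g - c) - x 1 = -(c - g) := by ring
      rw [this, abs_neg, ← Real.dist_eq]
      exact hgc
    · show dist ((p + n) 2) (x 2) < ε
      simp [e2, hε]
  · exact Submodule.add_mem _
      (Submodule.smul_mem _ _ (Submodule.subset_span (by simp)))
      (Submodule.smul_mem _ _ (Submodule.subset_span (by simp)))
  · rw [hN, SetLike.mem_coe, AddSubgroup.mem_pi]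
    intro i _
    fin_cases i <;> rw [AddSubgroup.mem_zmultiples_iff]
    · exact ⟨-m, by simp [hn']⟩
    · exact ⟨k, by simp [hn']⟩
    · exact ⟨0, by simp [hn']⟩
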